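/- arXiv:2111.05816 — 2 statements merged into one kernel-verified Lean document; each statement's English description precedes it below -/
import Mathlib

section
/- Hard direction of the matching-conductance Cheeger inequality: for any finite graph G on at least 2 vertices, Υ*(G) ≤ 16·√(λ*(G)), where λ*(G) is the one-dimensional relaxation value and Υ*(G) is the matching conductance. -/
open Finset
open scoped Classical

set_option maxHeartbeats 1000000

/-- Maximum size of a matching among edges of `G` crossing from `S` to its complement. -/
noncomputable def cutMatchNum {V : Type*} [Fintype V] (G : SimpleGraph V) (S : Finset V) : ℕ :=
  sSup {n : ℕ | ∃ M : Finset (V × V),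
    (∀ p ∈ M, p.1 ∈ S ∧ p.2 ∉ S ∧ G.Adj p.1 p.2) ∧
    (∀ p ∈ M, ∀ q ∈ M, p ≠ q → p.1 ≠ q.1 ∧ p.1 ≠ q.2 ∧ p.2 ≠ q.1 ∧ p.2 ≠ q.2) ∧
    M.card = n}

/-- Matching conductance Υ*(G). -/
noncomputable def matchCond {V : Type*} [Fintype V] (G : SimpleGraph V) : ℝ :=
  sInf {r : ℝ | ∃ S : Finset V, S.Nonempty ∧ 2 * S.card ≤ Fintype.card V ∧
    r = (cutMatchNum G S : ℝ) / S.card}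

/-- The one-dimensional relaxation value `λ*(G)`: the infimum over pairs `(f, g)` with
`Σ f = 0`, `f ≢ 0`, `g ≥ 0`, and `g(u)+g(v) ≥ (f(u)−f(v))²` on edges, of
`(Σ g)/(Σ f²)`. -/
noncomputable def oneDimGap {V : Type*} [Fintype V] (G : SimpleGraph V) : ℝ :=
  sInf {r : ℝ | ∃ f g : V → ℝ, (∑ u, f u) = 0 ∧ (∃ u, f u ≠ 0) ∧
    (∀ u, 0 ≤ g u) ∧ (∀ u v, G.Adj u v → (f u - f v) ^ 2 ≤ g u + g v) ∧
    r = (∑ u, g u) / (∑ u, f u ^ 2)}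

/-- Telescoping identity for sweep levels. -/
lemma sweepT1 (L : Finset ℝ) (q : ℝ → ℝ)
    (hpos : ∀ t ∈ L, 0 < t)
    (hqlt : ∀ t ∈ L, q t < t)
    (hqmem : ∀ t ∈ L, q t = 0 ∨ q t ∈ L)
    (hqmax : ∀ s ∈ L, ∀ t, s < t → s ≤ q t) :
    ∀ a ∈ L, ∑ t ∈ L.filter (fun t => t ≤ a), (t - q t) = a := by
  suffices H : ∀ n : ℕ, ∀ a ∈ L, (L.filter (fun t => t ≤ a)).card ≤ n →
      ∑ t ∈ L.filter (fun t => t ≤ a), (t - q t) = a by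
    intro a ha; exact H _ a ha le_rfl
  intro n
  induction n with
  | zero =>
    intro a ha hc
    exfalso
    have : a ∈ L.filter (fun t => t ≤ a) := mem_filter.2 ⟨ha, le_rfl⟩
    have := card_pos.2 ⟨a, this⟩
    omega
  | succ n ih =>
    intro a ha hc
    have hsplit : L.filter (fun t => t ≤ a) = insert a (L.filter (fun t => t ≤ q a)) := by
      ext t
      simp only [mem_insert, mem_filter]
      constructor
      · rintro ⟨htL, hta⟩
        rcases eq_or_lt_of_le hta with h | h
        · exact Or.inl h
        · exact Or.inr ⟨htL, hqmax t htL a h⟩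
      · rintro (rfl | ⟨htL, htq⟩)
        · exact ⟨ha, le_rfl⟩
        · exact ⟨htL, htq.trans (hqlt a ha).le⟩
    have hnotmem : a ∉ L.filter (fun t => t ≤ q a) := by
      simp only [mem_filter, not_and]
      intro _
      exact not_le.2 (hqlt a ha)
    rw [hsplit, sum_insert hnotmem]
    rcases hqmem a ha with h0 | hmem
    · have : L.filter (fun t => t ≤ q a) = ∅ := by
        rw [filter_eq_empty_iff]
        intro t htL
        rw [h0]
        exact not_le.2 (hpos t htL)
      rw [this, sum_empty, h0]; ring
    · have hcard : (L.filter (fun t => t ≤ q a)).card ≤ n := by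
        have : (insert a (L.filter (fun t => t ≤ q a))).card ≤ n + 1 := hsplit ▸ hc
        rw [card_insert_of_notMem hnotmem] at this
        omega
      rw [ih (q a) hmem hcard]; ring

/-- Disjoint-interval sum bound for sweep levels. -/
lemma sweepT2 (L : Finset ℝ) (q : ℝ → ℝ)
    (hqmax : ∀ s ∈ L, ∀ t, s < t → s ≤ q t) (a x : ℝ) :
    ∀ F ⊆ L, (∀ t ∈ F, t ≤ a ∧ x ≤ q t) → ∑ t ∈ F, (t - q t) ≤ max (a - x) 0 := by
  suffices H : ∀ n : ℕ, ∀ (a : ℝ), ∀ F ⊆ L, F.card ≤ n → (∀ t ∈ F, t ≤ a ∧ x ≤ q t) →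
      ∑ t ∈ F, (t - q t) ≤ max (a - x) 0 by
    intro F hFL hF; exact H F.card a F hFL le_rfl hF
  intro n
  induction n with
  | zero =>
    intro a F hFL hc hF
    rw [Finset.card_eq_zero.1 (Nat.le_zero.1 hc), sum_empty]
    exact le_max_right _ _
  | succ n ih =>
    intro a F hFL hc hF
    rcases F.eq_empty_or_nonempty with rfl | hne
    · rw [sum_empty]; exact le_max_right _ _
    set t₀ := F.max' hne with ht₀
    have ht₀F : t₀ ∈ F := F.max'_mem hne
    have hrest : ∀ t ∈ F.erase t₀, t ≤ q t₀ ∧ x ≤ q t := by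
      intro t ht
      obtain ⟨hne', htF⟩ := mem_erase.1 ht
      have hlt : t < t₀ := lt_of_le_of_ne (F.le_max' t htF) hne'
      exact ⟨hqmax t (hFL htF) t₀ hlt, (hF t htF).2⟩
    have hsum : ∑ t ∈ F.erase t₀, (t - q t) ≤ max (q t₀ - x) 0 := by
      refine ih (q t₀) (F.erase t₀) ((erase_subset _ _).trans hFL) ?_ hrest
      have := card_erase_of_mem ht₀F
      omega
    have hxq : x ≤ q t₀ := (hF t₀ ht₀F).2
    have hmax : max (q t₀ - x) 0 = q t₀ - x := max_eq_left (by linarith)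
    have := Finset.add_sum_erase F (fun t => t - q t) ht₀F
    calc ∑ t ∈ F, (t - q t) = (t₀ - q t₀) + ∑ t ∈ F.erase t₀, (t - q t) := this.symm
      _ ≤ (t₀ - q t₀) + (q t₀ - x) := by rw [hmax] at hsum; linarith
      _ = t₀ - x := by ring
      _ ≤ a - x := by have := (hF t₀ ht₀F).1; linarith
      _ ≤ max (a - x) 0 := le_max_left _ _

/-- Existence of a median. -/
lemma exists_median {V : Type*} [Fintype V] [Nonempty V] (f : V → ℝ) :
    ∃ M : ℝ, 2 * (univ.filter (fun u => M < f u)).card ≤ Fintype.card V ∧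
      2 * (univ.filter (fun u => f u < M)).card ≤ Fintype.card V := by
  classical
  set n := Fintype.card V with hn
  set s : Finset ℝ := univ.image f with hs
  have hsne : s.Nonempty := (univ_nonempty).image f
  set T : Finset ℝ := s.filter (fun c => n ≤ 2 * (univ.filter (fun u => f u ≤ c)).card) with hT
  have hTne : T.Nonempty := by
    refine ⟨s.max' hsne, mem_filter.2 ⟨s.max'_mem hsne, ?_⟩⟩
    have : univ.filter (fun u => f u ≤ s.max' hsne) = univ := by
      apply filter_true_of_mem
      intro u _
      exact s.le_max' _ (mem_image_of_mem f (mem_univ u))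
    rw [this, card_univ]
    omega
  refine ⟨T.min' hTne, ?_, ?_⟩
  · have hM : n ≤ 2 * (univ.filter (fun u => f u ≤ T.min' hTne)).card :=
      (mem_filter.1 (T.min'_mem hTne)).2
    have hsplit : (univ.filter (fun u => f u ≤ T.min' hTne)).card
        + (univ.filter (fun u => ¬ f u ≤ T.min' hTne)).card = n := by
      rw [card_filter_add_card_filter_not, card_univ]
    have : (univ.filter (fun u => T.min' hTne < f u)) = (univ.filter (fun u => ¬ f u ≤ T.min' hTne)) := by
      apply filter_congr; intro u _; rw [not_le]
    rw [this]; omega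
  · by_contra hcon
    push_neg at hcon
    set W : Finset V := univ.filter (fun u => f u < T.min' hTne) with hW
    have hWne : W.Nonempty := by
      rw [← card_pos]; omega
    obtain ⟨w, hwW, hwmax⟩ := W.exists_max_image f hWne
    set M' : ℝ := f w with hM'
    have hM's : M' ∈ s := mem_image_of_mem f (mem_univ w)
    have hM'lt : M' < T.min' hTne := (mem_filter.1 hwW).2
    have hsub : W ⊆ univ.filter (fun u => f u ≤ M') := by
      intro u hu
      exact mem_filter.2 ⟨mem_univ u, hwmax u hu⟩
    have hM'T : M' ∈ T := by
      refine mem_filter.2 ⟨hM's, ?_⟩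
      have := card_le_card hsub
      omega
    exact absurd (T.min'_le _ hM'T) (not_le.2 hM'lt)


lemma cutMatchNum_le {V : Type*} [Fintype V] (G : SimpleGraph V) (S : Finset V) (K : ℕ)
    (h : ∀ M : Finset (V × V),
      (∀ p ∈ M, p.1 ∈ S ∧ p.2 ∉ S ∧ G.Adj p.1 p.2) →
      (∀ p ∈ M, ∀ q ∈ M, p ≠ q → p.1 ≠ q.1 ∧ p.1 ≠ q.2 ∧ p.2 ≠ q.1 ∧ p.2 ≠ q.2) →
      M.card ≤ K) : cutMatchNum G S ≤ K := by
  apply csSup_le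
  · exact ⟨0, ∅, by simp, by simp, by simp⟩
  · rintro n ⟨M, h1, h2, rfl⟩
    exact h M h1 h2

lemma matchCond_nonneg_mem {V : Type*} [Fintype V] (G : SimpleGraph V) :
    BddBelow {r : ℝ | ∃ S : Finset V, S.Nonempty ∧ 2 * S.card ≤ Fintype.card V ∧
      r = (cutMatchNum G S : ℝ) / S.card} := by
  refine ⟨0, ?_⟩
  rintro r ⟨S, _, _, rfl⟩
  positivity

lemma matchCond_le {V : Type*} [Fintype V] (G : SimpleGraph V) (S : Finset V)
    (h1 : S.Nonempty) (h2 : 2 * S.card ≤ Fintype.card V) :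
    matchCond G ≤ (cutMatchNum G S : ℝ) / S.card :=
  csInf_le (matchCond_nonneg_mem G) ⟨S, h1, h2, rfl⟩

lemma matchCond_le_one {V : Type*} [Fintype V] (G : SimpleGraph V)
    (hcard : 2 ≤ Fintype.card V) : matchCond G ≤ 1 := by
  obtain ⟨a⟩ : Nonempty V := by
    rw [← Fintype.card_pos_iff]; omega
  have h2 : 2 * ({a} : Finset V).card ≤ Fintype.card V := by
    simpa using hcard
  have hle : cutMatchNum G {a} ≤ 1 := by
    apply cutMatchNum_le
    intro M h1 hdis
    apply Finset.card_le_one.2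
    intro p hp q hq
    by_contra hne
    have hp1 : p.1 = a := by simpa using (h1 p hp).1
    have hq1 : q.1 = a := by simpa using (h1 q hq).1
    exact (hdis p hp q hq hne).1 (hp1.trans hq1.symm)
  calc matchCond G ≤ (cutMatchNum G {a} : ℝ) / ({a} : Finset V).card :=
        matchCond_le G {a} (singleton_nonempty a) h2
    _ ≤ 1 := by
        simp only [card_singleton, Nat.cast_one, div_one]
        exact_mod_cast hle

/-- Choice of the half function `h` from `f` and a median `M`. -/
lemma exists_half {V : Type*} [Fintype V] (G : SimpleGraph V) (f g : V → ℝ) (M : ℝ)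
    (hsum : (∑ u, f u) = 0)
    (hedge : ∀ u v, G.Adj u v → (f u - f v) ^ 2 ≤ g u + g v)
    (hmed1 : 2 * (univ.filter (fun u => M < f u)).card ≤ Fintype.card V)
    (hmed2 : 2 * (univ.filter (fun u => f u < M)).card ≤ Fintype.card V) :
    ∃ h : V → ℝ, (∀ u, 0 ≤ h u) ∧
      2 * (univ.filter (fun u => h u ≠ 0)).card ≤ Fintype.card V ∧
      (∑ u, f u ^ 2) / 2 ≤ ∑ u, h u ^ 2 ∧
      (∀ u v, G.Adj u v → (h u - h v) ^ 2 ≤ g u + g v) := by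
  classical
  set hp : V → ℝ := fun u => max (f u - M) 0 with hhp
  set hm : V → ℝ := fun u => max (M - f u) 0 with hhm
  have hdecomp : ∀ u, hp u ^ 2 + hm u ^ 2 = (f u - M) ^ 2 := by
    intro u
    rcases le_or_gt (f u) M with h | h
    · have h1 : hp u = 0 := max_eq_right (by simp [hhp]; linarith)
      have h2 : hm u = M - f u := max_eq_left (by linarith)
      rw [h1, h2]; ring
    · have h1 : hp u = f u - M := max_eq_left (by linarith)
      have h2 : hm u = 0 := max_eq_right (by linarith)
      rw [h1, h2]; ring
  have hsumsq : (∑ u, f u ^ 2) ≤ ∑ u, hp u ^ 2 + ∑ u, hm u ^ 2 := by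
    have : ∑ u, (hp u ^ 2 + hm u ^ 2) = ∑ u, ((f u - M) ^ 2) := by
      apply Finset.sum_congr rfl; intro u _; exact hdecomp u
    rw [← Finset.sum_add_distrib, this]
    have expand : ∀ u : V, (f u - M) ^ 2 = f u ^ 2 - 2 * M * f u + M ^ 2 := by
      intro u; ring
    calc (∑ u, f u ^ 2) ≤ (∑ u, f u ^ 2) + (Fintype.card V : ℝ) * M ^ 2 := by
          have : (0:ℝ) ≤ (Fintype.card V : ℝ) * M ^ 2 := by positivity
          linarith
      _ = ∑ u, ((f u - M) ^ 2) := by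
          simp_rw [expand]
          rw [Finset.sum_add_distrib, Finset.sum_sub_distrib, ← Finset.mul_sum, hsum,
            Finset.sum_const, card_univ, nsmul_eq_mul]
          ring
  have sqmax : ∀ a b : ℝ, (max a 0 - max b 0) ^ 2 ≤ (a - b) ^ 2 := by
    intro a b
    calc (max a 0 - max b 0) ^ 2 = |max a 0 - max b 0| ^ 2 := (sq_abs _).symm
      _ ≤ |a - b| ^ 2 := pow_le_pow_left₀ (abs_nonneg _) (abs_max_sub_max_le_abs a b 0) 2
      _ = (a - b) ^ 2 := sq_abs _
  have hplip : ∀ u v, G.Adj u v → (hp u - hp v) ^ 2 ≤ g u + g v := by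
    intro u v huv
    calc (hp u - hp v) ^ 2 ≤ ((f u - M) - (f v - M)) ^ 2 := sqmax _ _
      _ = (f u - f v) ^ 2 := by ring_nf
      _ ≤ g u + g v := hedge u v huv
  have hmlip : ∀ u v, G.Adj u v → (hm u - hm v) ^ 2 ≤ g u + g v := by
    intro u v huv
    calc (hm u - hm v) ^ 2 ≤ ((M - f u) - (M - f v)) ^ 2 := sqmax _ _
      _ = (f u - f v) ^ 2 := by ring_nf
      _ ≤ g u + g v := hedge u v huv
  have hpsupp : univ.filter (fun u => hp u ≠ 0) = univ.filter (fun u => M < f u) := by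
    apply filter_congr
    intro u _
    constructor
    · intro h
      by_contra hc
      exact h (max_eq_right (by push_neg at hc; linarith))
    · intro h
      have : hp u = f u - M := max_eq_left (by linarith)
      rw [this]; intro hc; linarith
  have hmsupp : univ.filter (fun u => hm u ≠ 0) = univ.filter (fun u => f u < M) := by
    apply filter_congr
    intro u _
    constructor
    · intro h
      by_contra hc
      exact h (max_eq_right (by push_neg at hc; linarith))
    · intro h
      have : hm u = M - f u := max_eq_left (by linarith)
      rw [this]; intro hc; linarith
  rcases le_or_gt ((∑ u, f u ^ 2) / 2) (∑ u, hp u ^ 2) with hcase | hcase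
  · exact ⟨hp, fun u => le_max_right _ _, by rw [hpsupp]; exact hmed1, hcase, hplip⟩
  · refine ⟨hm, fun u => le_max_right _ _, by rw [hmsupp]; exact hmed2, by linarith, hmlip⟩

lemma cover_bound {V : Type*} [Fintype V] (G : SimpleGraph V) (h g : V → ℝ) (t s : ℝ)
    (hh0 : ∀ u, 0 ≤ h u)
    (hlip : ∀ u v, G.Adj u v → (h u - h v) ^ 2 ≤ g u + g v)
    (hs0 : 0 ≤ s) (hst : s < t) (htpos : 0 < t)
    (hkey : ∀ v, h v ^ 2 < t → h v ^ 2 ≤ s) :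
    cutMatchNum G (univ.filter (fun u => t ≤ h u ^ 2)) ≤
      (univ.filter (fun u => s < h u ^ 2 ∧ (h u ^ 2 - s) ^ 2 ≤ 8 * g u * h u ^ 2)).card +
      (univ.filter (fun v => h v ^ 2 < t ∧ (t - h v ^ 2) ^ 2 ≤ 8 * g v * t)).card := by
  classical
  apply cutMatchNum_le
  intro Mt h1 h2
  have hdich : ∀ p ∈ Mt, ¬ (s < h p.1 ^ 2 ∧ (h p.1 ^ 2 - s) ^ 2 ≤ 8 * g p.1 * h p.1 ^ 2) →
      (h p.2 ^ 2 < t ∧ (t - h p.2 ^ 2) ^ 2 ≤ 8 * g p.2 * t) := by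
    intro p hp hnp1
    obtain ⟨hpS, hpnS, hadj⟩ := h1 p hp
    have hta : t ≤ h p.1 ^ 2 := (mem_filter.1 hpS).2
    have htb : h p.2 ^ 2 < t := by
      by_contra hcon
      exact hpnS (mem_filter.2 ⟨mem_univ _, not_lt.1 hcon⟩)
    have hbq : h p.2 ^ 2 ≤ s := hkey _ htb
    have hedge' : (h p.1 - h p.2) ^ 2 ≤ g p.1 + g p.2 := hlip _ _ hadj
    have ha0 : 0 ≤ h p.1 := hh0 _
    have hb0 : 0 ≤ h p.2 := hh0 _
    have hba : h p.2 < h p.1 := by nlinarith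
    rcases le_or_gt (g p.2) (g p.1) with hg | hg
    · exfalso
      apply hnp1
      constructor
      · exact lt_of_lt_of_le hst hta
      · have e1 : (h p.1 - h p.2) ^ 2 ≤ 2 * g p.1 := by linarith
        have e2 : h p.1 ^ 2 - s ≤ 2 * h p.1 * (h p.1 - h p.2) := by nlinarith
        have e3 : 0 ≤ h p.1 ^ 2 - s := by linarith
        nlinarith [sq_nonneg (h p.1 - h p.2), mul_nonneg ha0 ha0]
    · refine ⟨htb, ?_⟩
      set st := Real.sqrt t with hstdef
      have hst2 : st ^ 2 = t := Real.sq_sqrt htpos.le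
      have hst0 : 0 ≤ st := Real.sqrt_nonneg t
      have hstb : h p.2 ≤ st := by nlinarith
      have hsta : st ≤ h p.1 := by nlinarith
      have e1 : (h p.1 - h p.2) ^ 2 ≤ 2 * g p.2 := by linarith
      have e2 : t - h p.2 ^ 2 ≤ 2 * st * (h p.1 - h p.2) := by nlinarith
      have e3 : 0 ≤ t - h p.2 ^ 2 := by linarith
      nlinarith [sq_nonneg (h p.1 - h p.2), mul_nonneg hst0 hst0]
  have hsplit : (Mt.filter (fun p => s < h p.1 ^ 2 ∧ (h p.1 ^ 2 - s) ^ 2 ≤ 8 * g p.1 * h p.1 ^ 2)).card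
      + (Mt.filter (fun p => ¬ (s < h p.1 ^ 2 ∧ (h p.1 ^ 2 - s) ^ 2 ≤ 8 * g p.1 * h p.1 ^ 2))).card
      = Mt.card := card_filter_add_card_filter_not _
  have hc1 : (Mt.filter (fun p => s < h p.1 ^ 2 ∧ (h p.1 ^ 2 - s) ^ 2 ≤ 8 * g p.1 * h p.1 ^ 2)).card
      ≤ (univ.filter (fun u => s < h u ^ 2 ∧ (h u ^ 2 - s) ^ 2 ≤ 8 * g u * h u ^ 2)).card := by
    apply card_le_card_of_injOn (fun p => p.1)
    · intro p hp
      exact mem_filter.2 ⟨mem_univ _, (mem_filter.1 hp).2⟩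
    · intro p hp q hq hpq
      by_contra hne
      exact (h2 p (filter_subset _ _ hp) q (filter_subset _ _ hq) hne).1 hpq
  have hc2 : (Mt.filter (fun p => ¬ (s < h p.1 ^ 2 ∧ (h p.1 ^ 2 - s) ^ 2 ≤ 8 * g p.1 * h p.1 ^ 2))).card
      ≤ (univ.filter (fun v => h v ^ 2 < t ∧ (t - h v ^ 2) ^ 2 ≤ 8 * g v * t)).card := by
    apply card_le_card_of_injOn (fun p => p.2)
    · intro p hp
      obtain ⟨hpM, hnp1⟩ := mem_filter.1 hp
      exact mem_filter.2 ⟨mem_univ _, hdich p hpM hnp1⟩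
    · intro p hp q hq hpq
      by_contra hne
      exact (h2 p (filter_subset _ _ hp) q (filter_subset _ _ hq) hne).2.2.2 hpq
  omega

lemma lemmaA {V : Type*} [Fintype V] (G : SimpleGraph V) (hcard : 2 ≤ Fintype.card V)
    (f g : V → ℝ) (hsum : (∑ u, f u) = 0) (hne : ∃ u, f u ≠ 0) (hg0 : ∀ u, 0 ≤ g u)
    (hedge : ∀ u v, G.Adj u v → (f u - f v) ^ 2 ≤ g u + g v) :
    matchCond G ≤ 12 * Real.sqrt ((∑ u, g u) / (∑ u, f u ^ 2)) +
      16 * ((∑ u, g u) / (∑ u, f u ^ 2)) := by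
  classical
  have hnonempty : Nonempty V := by rw [← Fintype.card_pos_iff]; omega
  obtain ⟨M, hmed1, hmed2⟩ := exists_median f
  obtain ⟨h, hh0, hsupp, hH2, hlip⟩ := exists_half G f g M hsum hedge hmed1 hmed2
  set H0 : ℝ := ∑ u, f u ^ 2 with hH0
  set G0 : ℝ := ∑ u, g u with hG0
  have hH0pos : 0 < H0 := by
    obtain ⟨u, hu⟩ := hne
    exact Finset.sum_pos' (fun v _ => sq_nonneg _) ⟨u, mem_univ u, by positivity⟩
  have hG0nn : 0 ≤ G0 := Finset.sum_nonneg (fun u _ => hg0 u)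
  set H : ℝ := ∑ u, h u ^ 2 with hHdef
  have hHpos : 0 < H := lt_of_lt_of_le (by linarith) hH2
  -- the levels
  set L : Finset ℝ := (univ.image (fun u => h u ^ 2)).filter (fun t => 0 < t) with hL
  set q : ℝ → ℝ :=
    fun t => (insert (0:ℝ) (L.filter (fun s => s < t))).max' (insert_nonempty _ _) with hqdef
  have hq0 : ∀ t, 0 ≤ q t := fun t => le_max' _ _ (mem_insert_self _ _)
  have hpos : ∀ t ∈ L, 0 < t := fun t ht => (mem_filter.1 ht).2
  have hqlt : ∀ t ∈ L, q t < t := by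
    intro t ht
    apply (Finset.max'_lt_iff _ _).2
    intro y hy
    rcases mem_insert.1 hy with rfl | hy'
    · exact hpos t ht
    · exact (mem_filter.1 hy').2
  have hqmem : ∀ t, q t = 0 ∨ q t ∈ L := by
    intro t
    rcases mem_insert.1 ((insert (0:ℝ) (L.filter (fun s => s < t))).max'_mem (insert_nonempty _ _))
      with h0 | hmem
    · exact Or.inl h0
    · exact Or.inr (mem_filter.1 hmem).1
  have hqmax : ∀ s ∈ L, ∀ t, s < t → s ≤ q t := by
    intro s hs t hst
    refine le_max' _ _ (mem_insert_of_mem ?_)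
    exact mem_filter.2 ⟨hs, hst⟩
  have hmemL : ∀ u, h u ≠ 0 → h u ^ 2 ∈ L := by
    intro u hu
    refine mem_filter.2 ⟨mem_image_of_mem _ (mem_univ u), ?_⟩
    positivity
  have hkey : ∀ (v : V) (t : ℝ), h v ^ 2 < t → h v ^ 2 ≤ q t := by
    intro v t hvt
    rcases eq_or_ne (h v) 0 with h0 | h0
    · rw [h0]; simpa using hq0 t
    · exact hqmax _ (hmemL v h0) t hvt
  set S : ℝ → Finset V := fun t => univ.filter (fun u => t ≤ h u ^ 2) with hSdef
  have hcover : ∀ t ∈ L, cutMatchNum G (S t) ≤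
      (univ.filter (fun u => q t < h u ^ 2 ∧ (h u ^ 2 - q t) ^ 2 ≤ 8 * g u * h u ^ 2)).card +
      (univ.filter (fun v => h v ^ 2 < t ∧ (t - h v ^ 2) ^ 2 ≤ 8 * g v * t)).card := by
    intro t ht
    exact cover_bound G h g t (q t) hh0 hlip (hq0 t) (hqlt t ht) (hpos t ht)
      (fun v hv => hkey v t hv)
  -- weights
  have hw0 : ∀ t ∈ L, 0 ≤ t - q t := fun t ht => (sub_pos.2 (hqlt t ht)).le
  -- per-vertex telescoping
  have hperu : ∀ u : V, ∑ t ∈ L.filter (fun t => t ≤ h u ^ 2), (t - q t) = h u ^ 2 := by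
    intro u
    rcases eq_or_ne (h u) 0 with h0 | h0
    · have : L.filter (fun t => t ≤ h u ^ 2) = ∅ := by
        rw [filter_eq_empty_iff]
        intro t ht
        rw [h0]
        push_neg
        simpa using hpos t ht
      rw [this, sum_empty, h0]; ring
    · exact sweepT1 L q hpos hqlt (fun t _ => hqmem t) hqmax _ (hmemL u h0)
  have hsum_card : ∑ t ∈ L, (((S t).card : ℝ)) * (t - q t) = H := by
    have step1 : ∀ t ∈ L, (((S t).card : ℝ)) * (t - q t)
        = ∑ u : V, (if t ≤ h u ^ 2 then (t - q t) else 0) := by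
      intro t ht
      rw [Finset.sum_ite, Finset.sum_const, Finset.sum_const_zero, add_zero, nsmul_eq_mul]
    rw [Finset.sum_congr rfl step1, Finset.sum_comm]
    rw [hHdef]
    refine Finset.sum_congr rfl (fun u _ => ?_)
    rw [← Finset.sum_filter]
    exact hperu u
  -- first count bound
  have hC1u : ∀ u : V,
      ∑ t ∈ L.filter (fun t => q t < h u ^ 2 ∧ (h u ^ 2 - q t) ^ 2 ≤ 8 * g u * h u ^ 2),
        (t - q t) ≤ Real.sqrt (8 * g u) * h u := by
    intro u
    have hbnd : ∀ t ∈ L.filter (fun t => q t < h u ^ 2 ∧ (h u ^ 2 - q t) ^ 2 ≤ 8 * g u * h u ^ 2),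
        t ≤ h u ^ 2 ∧ (h u ^ 2 - Real.sqrt (8 * g u) * h u) ≤ q t := by
      intro t ht
      have htL := (mem_filter.1 ht).1
      have hq1 := (mem_filter.1 ht).2.1
      have hq2 := (mem_filter.1 ht).2.2
      constructor
      · by_contra hcon
        push_neg at hcon
        rcases eq_or_ne (h u) 0 with h0 | h0
        · rw [h0] at hq1
          simp at hq1
          exact absurd (lt_of_le_of_lt (hq0 t) hq1) (by simp)
        · exact absurd hq1 (not_lt.2 (le_trans (hqmax _ (hmemL u h0) t hcon) le_rfl)) 
      · have hle : h u ^ 2 - q t ≤ Real.sqrt (8 * g u * h u ^ 2) :=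
          Real.le_sqrt_of_sq_le hq2
        rw [Real.sqrt_mul (by linarith [hg0 u] : (0:ℝ) ≤ 8 * g u), Real.sqrt_sq (hh0 u)] at hle
        linarith
    have := sweepT2 L q hqmax (h u ^ 2) (h u ^ 2 - Real.sqrt (8 * g u) * h u) _
      (filter_subset _ _) hbnd
    calc ∑ t ∈ L.filter (fun t => q t < h u ^ 2 ∧ (h u ^ 2 - q t) ^ 2 ≤ 8 * g u * h u ^ 2),
          (t - q t) ≤ max (h u ^ 2 - (h u ^ 2 - Real.sqrt (8 * g u) * h u)) 0 := this
      _ = Real.sqrt (8 * g u) * h u := by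
          have hnn : (0:ℝ) ≤ Real.sqrt (8 * g u) * h u :=
            mul_nonneg (Real.sqrt_nonneg _) (hh0 u)
          rw [max_eq_left (by linarith)]
          ring
  have hC1 : ∑ t ∈ L,
      ((univ.filter (fun u => q t < h u ^ 2 ∧ (h u ^ 2 - q t) ^ 2 ≤ 8 * g u * h u ^ 2)).card : ℝ)
        * (t - q t) ≤ ∑ u : V, Real.sqrt (8 * g u) * h u := by
    have step1 : ∀ t ∈ L,
        ((univ.filter (fun u => q t < h u ^ 2 ∧ (h u ^ 2 - q t) ^ 2 ≤ 8 * g u * h u ^ 2)).card : ℝ)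
          * (t - q t)
        = ∑ u : V, (if q t < h u ^ 2 ∧ (h u ^ 2 - q t) ^ 2 ≤ 8 * g u * h u ^ 2
            then (t - q t) else 0) := by
      intro t ht
      rw [Finset.sum_ite, Finset.sum_const, Finset.sum_const_zero, add_zero, nsmul_eq_mul]
    rw [Finset.sum_congr rfl step1, Finset.sum_comm]
    refine Finset.sum_le_sum (fun u _ => ?_)
    rw [← Finset.sum_filter]
    exact hC1u u
  -- second count bound
  have hC2u : ∀ v : V,
      ∑ t ∈ L.filter (fun t => h v ^ 2 < t ∧ (t - h v ^ 2) ^ 2 ≤ 8 * g v * t),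
        (t - q t) ≤ 2 * (Real.sqrt (8 * g v) * h v) + 8 * g v := by
    intro v
    set c : ℝ := Real.sqrt (8 * g v) with hcdef
    have hc0 : 0 ≤ c := Real.sqrt_nonneg _
    have hc2 : c ^ 2 = 8 * g v := Real.sq_sqrt (by linarith [hg0 v])
    have hbnd : ∀ t ∈ L.filter (fun t => h v ^ 2 < t ∧ (t - h v ^ 2) ^ 2 ≤ 8 * g v * t),
        t ≤ (h v + c) ^ 2 ∧ h v ^ 2 ≤ q t := by
      intro t ht
      have htL := (mem_filter.1 ht).1
      have hb2 := (mem_filter.1 ht).2.1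
      have hsq := (mem_filter.1 ht).2.2
      refine ⟨?_, hkey v t hb2⟩
      have htpos : 0 < t := hpos t htL
      set st : ℝ := Real.sqrt t with hstdef
      have hst2 : st ^ 2 = t := Real.sq_sqrt htpos.le
      have hst0 : 0 ≤ st := Real.sqrt_nonneg t
      have hstpos : 0 < st := Real.sqrt_pos.2 htpos
      have h1 : t - h v ^ 2 ≤ c * st := by
        have := Real.le_sqrt_of_sq_le hsq
        rw [Real.sqrt_mul (by linarith [hg0 v] : (0:ℝ) ≤ 8 * g v) t] at this
        exact this
      have hstle : st ≤ h v + c := by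
        by_contra hcon
        push_neg at hcon
        have p1 : c * st < (st - h v) * st := by
          apply mul_lt_mul_of_pos_right _ hstpos
          linarith
        have p2 : (st - h v) * st ≤ (st - h v) * (st + h v) := by
          apply mul_le_mul_of_nonneg_left _ (by nlinarith [hh0 v])
          linarith [hh0 v]
        have p3 : (st - h v) * (st + h v) = t - h v ^ 2 := by
          rw [← hst2]; ring
        linarith
      calc t = st ^ 2 := hst2.symm
        _ ≤ (h v + c) ^ 2 := by
            apply pow_le_pow_left₀ hst0 hstle
    have := sweepT2 L q hqmax ((h v + c) ^ 2) (h v ^ 2) _ (filter_subset _ _) hbnd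
    calc ∑ t ∈ L.filter (fun t => h v ^ 2 < t ∧ (t - h v ^ 2) ^ 2 ≤ 8 * g v * t), (t - q t)
        ≤ max ((h v + c) ^ 2 - h v ^ 2) 0 := this
      _ = 2 * (c * h v) + c ^ 2 := by
          rw [max_eq_left (by nlinarith [hh0 v] : (0:ℝ) ≤ (h v + c) ^ 2 - h v ^ 2)]
          ring
      _ = 2 * (Real.sqrt (8 * g v) * h v) + 8 * g v := by rw [hc2]
  have hC2 : ∑ t ∈ L,
      ((univ.filter (fun v => h v ^ 2 < t ∧ (t - h v ^ 2) ^ 2 ≤ 8 * g v * t)).card : ℝ)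
        * (t - q t) ≤ 2 * (∑ u : V, Real.sqrt (8 * g u) * h u) + 8 * G0 := by
    have step1 : ∀ t ∈ L,
        ((univ.filter (fun v => h v ^ 2 < t ∧ (t - h v ^ 2) ^ 2 ≤ 8 * g v * t)).card : ℝ)
          * (t - q t)
        = ∑ v : V, (if h v ^ 2 < t ∧ (t - h v ^ 2) ^ 2 ≤ 8 * g v * t then (t - q t) else 0) := by
      intro t ht
      rw [Finset.sum_ite, Finset.sum_const, Finset.sum_const_zero, add_zero, nsmul_eq_mul]
    rw [Finset.sum_congr rfl step1, Finset.sum_comm]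
    calc ∑ v : V, ∑ t ∈ L, (if h v ^ 2 < t ∧ (t - h v ^ 2) ^ 2 ≤ 8 * g v * t
          then (t - q t) else 0)
        ≤ ∑ v : V, (2 * (Real.sqrt (8 * g v) * h v) + 8 * g v) := by
          refine Finset.sum_le_sum (fun v _ => ?_)
          rw [← Finset.sum_filter]
          exact hC2u v
      _ = 2 * (∑ u : V, Real.sqrt (8 * g u) * h u) + 8 * G0 := by
          rw [Finset.sum_add_distrib, ← Finset.mul_sum, ← Finset.mul_sum, hG0]
  -- Cauchy-Schwarz
  have hCS : ∑ u : V, Real.sqrt (8 * g u) * h u ≤ Real.sqrt (8 * G0) * Real.sqrt H := by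
    calc ∑ u : V, Real.sqrt (8 * g u) * h u
        ≤ Real.sqrt (∑ u : V, Real.sqrt (8 * g u) ^ 2) * Real.sqrt (∑ u : V, h u ^ 2) :=
          Real.sum_mul_le_sqrt_mul_sqrt _ _ _
      _ = Real.sqrt (8 * G0) * Real.sqrt H := by
          congr 1
          congr 1
          rw [Finset.sum_congr rfl (fun u _ => Real.sq_sqrt (by linarith [hg0 u] : (0:ℝ) ≤ 8 * g u)),
            ← Finset.mul_sum]
  set B : ℝ := 3 * (Real.sqrt (8 * G0) * Real.sqrt H) + 8 * G0 with hBdef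
  have hW : ∑ t ∈ L, (cutMatchNum G (S t) : ℝ) * (t - q t) ≤ B := by
    have hpt : ∀ t ∈ L, (cutMatchNum G (S t) : ℝ) * (t - q t) ≤
        (((univ.filter (fun u => q t < h u ^ 2 ∧ (h u ^ 2 - q t) ^ 2 ≤ 8 * g u * h u ^ 2)).card : ℝ)
          + ((univ.filter (fun v => h v ^ 2 < t ∧ (t - h v ^ 2) ^ 2 ≤ 8 * g v * t)).card : ℝ))
          * (t - q t) := by
      intro t ht
      apply mul_le_mul_of_nonneg_right _ (hw0 t ht)
      exact_mod_cast hcover t ht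
    calc ∑ t ∈ L, (cutMatchNum G (S t) : ℝ) * (t - q t)
        ≤ ∑ t ∈ L,
          ((((univ.filter (fun u => q t < h u ^ 2 ∧ (h u ^ 2 - q t) ^ 2 ≤ 8 * g u * h u ^ 2)).card : ℝ)
          + ((univ.filter (fun v => h v ^ 2 < t ∧ (t - h v ^ 2) ^ 2 ≤ 8 * g v * t)).card : ℝ))
          * (t - q t)) := Finset.sum_le_sum hpt
      _ = (∑ t ∈ L,
          ((univ.filter (fun u => q t < h u ^ 2 ∧ (h u ^ 2 - q t) ^ 2 ≤ 8 * g u * h u ^ 2)).card : ℝ)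
            * (t - q t))
          + ∑ t ∈ L,
          ((univ.filter (fun v => h v ^ 2 < t ∧ (t - h v ^ 2) ^ 2 ≤ 8 * g v * t)).card : ℝ)
            * (t - q t) := by
          rw [← Finset.sum_add_distrib]
          refine Finset.sum_congr rfl (fun t _ => ?_)
          ring
      _ ≤ (∑ u : V, Real.sqrt (8 * g u) * h u)
          + (2 * (∑ u : V, Real.sqrt (8 * g u) * h u) + 8 * G0) := add_le_add hC1 hC2
      _ = 3 * (∑ u : V, Real.sqrt (8 * g u) * h u) + 8 * G0 := by ring
      _ ≤ B := by
          rw [hBdef]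
          have : (0:ℝ) ≤ 3 := by norm_num
          nlinarith [hCS]
  have hLne : L.Nonempty := by
    have hex : ∃ u, h u ≠ 0 := by
      by_contra hcon
      push_neg at hcon
      have : H = 0 := by
        rw [hHdef]
        apply Finset.sum_eq_zero
        intro u _
        rw [hcon u]; ring
      linarith
    obtain ⟨u, hu⟩ := hex
    exact ⟨_, hmemL u hu⟩
  have hext : ∃ t ∈ L, (cutMatchNum G (S t) : ℝ) * H ≤ B * ((S t).card : ℝ) := by
    by_contra hcon
    push_neg at hcon
    have hlt : ∑ t ∈ L, (B * ((S t).card : ℝ)) * (t - q t)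
        < ∑ t ∈ L, ((cutMatchNum G (S t) : ℝ) * H) * (t - q t) := by
      apply Finset.sum_lt_sum_of_nonempty hLne
      intro t ht
      exact mul_lt_mul_of_pos_right (hcon t ht) (sub_pos.2 (hqlt t ht))
    have e1 : ∑ t ∈ L, (B * ((S t).card : ℝ)) * (t - q t) = B * H := by
      rw [← hsum_card, Finset.mul_sum]
      refine Finset.sum_congr rfl (fun t _ => ?_)
      ring
    have e2 : ∑ t ∈ L, ((cutMatchNum G (S t) : ℝ) * H) * (t - q t)
        = H * ∑ t ∈ L, (cutMatchNum G (S t) : ℝ) * (t - q t) := by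
      rw [Finset.mul_sum]
      refine Finset.sum_congr rfl (fun t _ => ?_)
      ring
    rw [e1, e2] at hlt
    nlinarith [hW, hHpos]
  obtain ⟨t, htL, hfin⟩ := hext
  have hSne : (S t).Nonempty := by
    obtain ⟨u, _, hu⟩ := mem_image.1 (mem_filter.1 htL).1
    exact ⟨u, mem_filter.2 ⟨mem_univ u, le_of_eq hu.symm⟩⟩
  have hcardpos : 0 < (S t).card := card_pos.2 hSne
  have hsub : S t ⊆ univ.filter (fun u => h u ≠ 0) := by
    intro u hu
    have h1 := (mem_filter.1 hu).2
    have h2 := hpos t htL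
    refine mem_filter.2 ⟨mem_univ u, ?_⟩
    intro h0
    rw [h0] at h1
    simp at h1
    linarith
  have h2card : 2 * (S t).card ≤ Fintype.card V := by
    have := card_le_card hsub
    omega
  have hmc := matchCond_le G (S t) hSne h2card
  have hratio : (cutMatchNum G (S t) : ℝ) / ((S t).card : ℝ) ≤ B / H := by
    rw [div_le_div_iff₀ (by exact_mod_cast hcardpos) hHpos]
    exact hfin
  -- final arithmetic
  have hρ : 0 ≤ G0 / H0 := div_nonneg hG0nn hH0pos.le
  have hGH : G0 / H ≤ 2 * (G0 / H0) := by
    rw [div_le_iff₀ hHpos]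
    have hcancel : G0 / H0 * H0 = G0 := div_mul_cancel₀ _ (ne_of_gt hH0pos)
    nlinarith [hH2, hρ]
  have hsHpos : 0 < Real.sqrt H := Real.sqrt_pos.2 hHpos
  have hBH : B / H ≤ 12 * Real.sqrt (G0 / H0) + 16 * (G0 / H0) := by
    have hHs : Real.sqrt H * Real.sqrt H = H := Real.mul_self_sqrt hHpos.le
    have hterm0 : Real.sqrt (8 * G0) * Real.sqrt H / H = Real.sqrt (8 * G0) / Real.sqrt H := by
      rw [div_eq_div_iff (ne_of_gt hHpos) (ne_of_gt hsHpos), mul_assoc, hHs]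
    have hterm1 : 3 * (Real.sqrt (8 * G0) * Real.sqrt H) / H = 3 * Real.sqrt (8 * G0 / H) := by
      rw [mul_div_assoc, hterm0, Real.sqrt_div (by linarith : (0:ℝ) ≤ 8 * G0) H]
    have hterm2 : Real.sqrt (8 * G0 / H) ≤ 4 * Real.sqrt (G0 / H0) := by
      calc Real.sqrt (8 * G0 / H) ≤ Real.sqrt (16 * (G0 / H0)) := by
            apply Real.sqrt_le_sqrt
            rw [mul_div_assoc]
            linarith [hGH]
        _ = 4 * Real.sqrt (G0 / H0) := by
            rw [show (16 : ℝ) = 4 ^ 2 by norm_num, Real.sqrt_mul (by positivity) _,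
              Real.sqrt_sq (by norm_num : (0:ℝ) ≤ 4)]
    have hterm4 : 8 * G0 / H ≤ 16 * (G0 / H0) := by
      rw [mul_div_assoc]
      linarith [hGH]
    calc B / H = 3 * (Real.sqrt (8 * G0) * Real.sqrt H) / H + 8 * G0 / H := by
          rw [hBdef, add_div]
      _ ≤ 3 * (4 * Real.sqrt (G0 / H0)) + 16 * (G0 / H0) := by
          rw [hterm1]
          linarith [hterm2, hterm4]
      _ = 12 * Real.sqrt (G0 / H0) + 16 * (G0 / H0) := by ring
  calc matchCond G ≤ (cutMatchNum G (S t) : ℝ) / ((S t).card : ℝ) := hmc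
    _ ≤ B / H := hratio
    _ ≤ 12 * Real.sqrt (G0 / H0) + 16 * (G0 / H0) := hBH


/-- Hard direction of the matching-conductance Cheeger inequality: `Υ*(G) ≤ 16·√(λ*(G))`. -/
theorem matchCond_le_sixteen_mul_sqrt_oneDimGap {V : Type*} [Fintype V] (G : SimpleGraph V)
    (hcard : 2 ≤ Fintype.card V) :
    matchCond G ≤ 16 * Real.sqrt (oneDimGap G) := by

  classical
  set Sset : Set ℝ := {r : ℝ | ∃ f g : V → ℝ, (∑ u, f u) = 0 ∧ (∃ u, f u ≠ 0) ∧
    (∀ u, 0 ≤ g u) ∧ (∀ u v, G.Adj u v → (f u - f v) ^ 2 ≤ g u + g v) ∧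
    r = (∑ u, g u) / (∑ u, f u ^ 2)} with hSset
  have hgap : oneDimGap G = sInf Sset := rfl
  obtain ⟨a, b, hab⟩ : ∃ a b : V, a ≠ b := by
    apply Fintype.exists_pair_of_one_lt_card
    omega
  have hfbound : ∀ u : V, -1 ≤ ((if u = a then (1:ℝ) else 0) - (if u = b then 1 else 0)) ∧
      ((if u = a then (1:ℝ) else 0) - (if u = b then 1 else 0)) ≤ 1 := by
    intro u
    constructor <;> split_ifs <;> norm_num
  have hne : Sset.Nonempty := by
    refine ⟨_, fun u => (if u = a then (1:ℝ) else 0) - (if u = b then 1 else 0),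
      fun _ => (4:ℝ), ?_, ?_, ?_, ?_, rfl⟩
    · rw [Finset.sum_sub_distrib]
      simp
    · refine ⟨a, ?_⟩
      simp [hab]
    · intro u; norm_num
    · intro u v _
      have h1 := hfbound u
      have h2 := hfbound v
      dsimp only
      nlinarith [h1.1, h1.2, h2.1, h2.2]
  have hbdd : BddBelow Sset := by
    refine ⟨0, ?_⟩
    rintro r ⟨f, g, hs, hne', hg, hed, rfl⟩
    exact div_nonneg (Finset.sum_nonneg fun u _ => hg u)
      (Finset.sum_nonneg fun u _ => sq_nonneg _)
  have hlam0 : 0 ≤ oneDimGap G := by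
    rw [hgap]
    apply le_csInf hne
    rintro r ⟨f, g, hs, hne', hg, hed, rfl⟩
    exact div_nonneg (Finset.sum_nonneg fun u _ => hg u)
      (Finset.sum_nonneg fun u _ => sq_nonneg _)
  have hsixteenth : Real.sqrt (1/256) = 1/16 := by
    rw [show (1:ℝ)/256 = (1/16)^2 by norm_num, Real.sqrt_sq (by norm_num : (0:ℝ) ≤ 1/16)]
  have key : ∀ ε : ℝ, 0 < ε → matchCond G ≤ 16 * Real.sqrt (oneDimGap G + ε) := by
    intro ε hε
    have hlt : sInf Sset < oneDimGap G + ε := by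
      rw [hgap]; linarith
    obtain ⟨r, hrS, hrlt⟩ := exists_lt_of_csInf_lt hne hlt
    obtain ⟨f, g, h1, h2, h3, h4, rfl⟩ := hrS
    have hA := lemmaA G hcard f g h1 h2 h3 h4
    set r : ℝ := (∑ u, g u) / (∑ u, f u ^ 2) with hrdef
    have hr0 : 0 ≤ r :=
      div_nonneg (Finset.sum_nonneg fun u _ => h3 u) (Finset.sum_nonneg fun u _ => sq_nonneg _)
    rcases le_or_gt (oneDimGap G + ε) (1/256) with hsmall | hbig
    · have hrsmall : r ≤ 1/256 := le_trans hrlt.le hsmall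
      have hsr : Real.sqrt r ≤ 1/16 := by
        rw [← hsixteenth]
        exact Real.sqrt_le_sqrt hrsmall
      have h16 : 16 * r ≤ Real.sqrt r := by
        have := Real.mul_self_sqrt hr0
        nlinarith [Real.sqrt_nonneg r]
      have hmono : Real.sqrt r ≤ Real.sqrt (oneDimGap G + ε) := Real.sqrt_le_sqrt hrlt.le
      have hnn : 0 ≤ Real.sqrt (oneDimGap G + ε) := Real.sqrt_nonneg _
      calc matchCond G ≤ 12 * Real.sqrt r + 16 * r := hA
        _ ≤ 13 * Real.sqrt r := by linarith
        _ ≤ 16 * Real.sqrt (oneDimGap G + ε) := by linarith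
    · have : Real.sqrt (1/256) ≤ Real.sqrt (oneDimGap G + ε) := Real.sqrt_le_sqrt hbig.le
      rw [hsixteenth] at this
      have := matchCond_le_one G hcard
      linarith
  have final : ∀ δ : ℝ, 0 < δ → matchCond G ≤ 16 * Real.sqrt (oneDimGap G) + δ := by
    intro δ hδ
    have hε : (0:ℝ) < (δ/16)^2 := by positivity
    have hk := key _ hε
    have hs : Real.sqrt (oneDimGap G + (δ/16)^2) ≤ Real.sqrt (oneDimGap G) + δ/16 := by
      rw [show Real.sqrt (oneDimGap G) + δ/16
          = Real.sqrt ((Real.sqrt (oneDimGap G) + δ/16)^2) from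
        (Real.sqrt_sq (by positivity)).symm]
      apply Real.sqrt_le_sqrt
      nlinarith [Real.sq_sqrt hlam0, Real.sqrt_nonneg (oneDimGap G)]
    linarith
  exact le_of_forall_pos_le_add final
end

section
/- Let G = (V,E) be a finite connected graph, π a strictly positive probability distribution on V, T a BFS spanning tree of G rooted at o with diameter D, and ε ∈ (0,1). Define the weighting w on T-edges plus self-loops by w({x}) = π(x) for each vertex x and w({x,prt(x)}) = (ε/(2D))·π(T_x) for x ≠ o. Then the total weight satisfies w(V) ≤ 1+ε, and the induced stationary distribution π_w(x) = w(x)/w(V) satisfies π_w(x)/π(x) ≥ 1/(1+ε) ≥ 1−ε for every vertex x; in particular the total variation distance between π_w and π is at most ε. -/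
open Finset
open scoped Classical

/-- The subtree rooted at `x` in a rooted tree given by a parent map `prt`. -/
noncomputable def subtree {V : Type*} [Fintype V] (prt : V → V) (x : V) : Finset V :=
  univ.filter (fun z => ∃ n, prt^[n] z = x)

/-- The simple graph associated with the parent map `prt`. -/
def prtGraph {V : Type*} (prt : V → V) : SimpleGraph V :=
  SimpleGraph.fromRel (fun x y => prt x = y ∨ prt y = x)

/-- The diameter `D` of the tree given by `prt`. -/
noncomputable def treeDiam {V : Type*} [Fintype V] (prt : V → V) : ℕ :=
  univ.sup fun x => univ.sup fun y => (prtGraph prt).dist x y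

/-- The weight of the edge from `x ≠ o` to its parent: `(ε/(2D))·π(T_x)`. -/
noncomputable def bfsEdgeW {V : Type*} [Fintype V] (prt : V → V) (o : V) (π : V → ℝ)
    (ε : ℝ) (x : V) : ℝ :=
  if x = o then 0 else (ε / (2 * treeDiam prt)) * ∑ z ∈ subtree prt x, π z

/-- The total weight at vertex `x`: the self-loop weight `π(x)`, plus the weight of the edge to
the parent of `x`, plus the weights of the edges to the children of `x`. -/
noncomputable def bfsVertexW {V : Type*} [Fintype V] (prt : V → V) (o : V) (π : V → ℝ)
    (ε : ℝ) (x : V) : ℝ :=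
  π x + bfsEdgeW prt o π ε x +
    ∑ c ∈ univ.filter (fun c => prt c = x ∧ c ≠ x), bfsEdgeW prt o π ε c

section Aux

variable {V : Type*} [Fintype V] {prt : V → V} {o : V}

noncomputable def depth (hreach : ∀ z : V, ∃ n, prt^[n] z = o) (z : V) : ℕ :=
  Nat.find (hreach z)

variable (hroot : prt o = o) (hreach : ∀ z : V, ∃ n, prt^[n] z = o)

set_option linter.unusedSectionVars false
include hreach

lemma depth_spec (z : V) : prt^[depth hreach z] z = o := Nat.find_spec (hreach z)

lemma depth_min {z : V} {n : ℕ} (h : n < depth hreach z) : prt^[n] z ≠ o :=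
  Nat.find_min (hreach z) h

lemma depth_le {z : V} {n : ℕ} (h : prt^[n] z = o) : depth hreach z ≤ n :=
  Nat.find_min' _ h

include hroot in
lemma iterate_eq_o {z : V} {n : ℕ} (h : depth hreach z ≤ n) : prt^[n] z = o := by
  rw [← Nat.sub_add_cancel h, Function.iterate_add_apply, depth_spec hreach,
    Function.iterate_fixed hroot]

lemma depth_o : depth hreach o = 0 := Nat.le_zero.1 (depth_le hreach rfl)

lemma eq_o_of_depth {z : V} (h : depth hreach z = 0) : z = o := by
  have h2 := depth_spec hreach z
  rwa [h] at h2

include hroot in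
lemma card_anc (z : V) :
    ((univ.filter fun c : V => ¬ c = o).filter fun c => ∃ n, prt^[n] z = c).card
      = depth hreach z := by
  have hset : ((univ.filter fun c : V => ¬ c = o).filter fun c => ∃ n, prt^[n] z = c)
      = (range (depth hreach z)).image (fun n => prt^[n] z) := by
    ext c
    simp only [mem_filter, mem_univ, true_and, mem_image, mem_range]
    constructor
    · rintro ⟨hc, n, rfl⟩
      refine ⟨n, ?_, rfl⟩
      by_contra hn
      exact hc (iterate_eq_o hroot hreach (le_of_not_gt hn))
    · rintro ⟨n, hn, rfl⟩
      exact ⟨depth_min hreach hn, n, rfl⟩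
  have key : ∀ a b : ℕ, a < b → b < depth hreach z → prt^[a] z = prt^[b] z → False := by
    intro a b hab hb heq
    have h1 : prt^[(depth hreach z - b) + a] z = o := by
      rw [Function.iterate_add_apply, heq, ← Function.iterate_add_apply,
        Nat.sub_add_cancel hb.le, depth_spec hreach]
    exact depth_min hreach (by omega) h1
  rw [hset, Finset.card_image_of_injOn, card_range]
  intro a ha b hb heq
  simp only [Finset.mem_coe, mem_range] at ha hb
  rcases lt_trichotomy a b with h | h | h
  · exact absurd (key a b h hb heq) not_false
  · exact h
  · exact absurd (key b a h ha heq.symm) not_false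

include hroot in
lemma depth_adj {a v : V} (h : (prtGraph prt).Adj a v) :
    depth hreach a ≤ depth hreach v + 1 := by
  rw [prtGraph, SimpleGraph.fromRel_adj] at h
  obtain ⟨hne, h⟩ := h
  have h' : prt a = v ∨ prt v = a := by tauto
  rcases h' with h' | h'
  · apply depth_le hreach
    rw [Function.iterate_succ_apply, h', depth_spec hreach]
  · have hv : v ≠ o := by
      intro hvo
      subst hvo
      exact hne (by rw [← h', hroot])
    have hd1 : 1 ≤ depth hreach v :=
      Nat.one_le_iff_ne_zero.2 fun h0 => hv (eq_o_of_depth hreach h0)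
    have h2 : prt^[depth hreach v - 1] a = o := by
      have := depth_spec hreach v
      rw [show depth hreach v = depth hreach v - 1 + 1 from by omega,
        Function.iterate_succ_apply, h'] at this
      exact this
    exact le_trans (depth_le hreach h2) (by omega)

include hroot in
lemma depth_le_walk : ∀ {a b : V} (w : (prtGraph prt).Walk a b),
    depth hreach a ≤ depth hreach b + w.length := by
  intro a b w
  induction w with
  | nil => simp
  | @cons x y z h p ih =>
    have h1 := depth_adj hroot hreach h
    simp only [SimpleGraph.Walk.length_cons]
    omega

lemma reach_aux : ∀ (n : ℕ) (z : V), depth hreach z ≤ n → (prtGraph prt).Reachable z o := by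
  intro n
  induction n with
  | zero =>
    intro z hz
    rw [Nat.le_zero] at hz
    rw [eq_o_of_depth hreach hz]
  | succ n ih =>
    intro z hz
    by_cases h : z = o
    · rw [h]
    · have hne : prt z ≠ z := by
        intro he
        obtain ⟨m, hm⟩ := hreach z
        rw [Function.iterate_fixed he] at hm
        exact h hm
      have hadj : (prtGraph prt).Adj z (prt z) := by
        rw [prtGraph, SimpleGraph.fromRel_adj]
        exact ⟨fun he => hne he.symm, Or.inl (Or.inl rfl)⟩
      have h1 : 1 ≤ depth hreach z :=
        Nat.one_le_iff_ne_zero.2 fun h0 => h (eq_o_of_depth hreach h0)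
      have h2 : prt^[depth hreach z - 1] (prt z) = o := by
        have := depth_spec hreach z
        rw [show depth hreach z = depth hreach z - 1 + 1 from by omega,
          Function.iterate_succ_apply] at this
        exact this
      exact hadj.reachable.trans (ih (prt z) (le_trans (depth_le hreach h2) (by omega)))

include hroot in
lemma depth_le_diam (z : V) : depth hreach z ≤ treeDiam prt := by
  obtain ⟨w, hw⟩ := (reach_aux hreach (depth hreach z) z le_rfl).exists_walk_length_eq_dist
  have h1 := depth_le_walk hroot hreach w
  rw [depth_o hreach, hw, zero_add] at h1
  refine le_trans h1 (le_trans ?_ (Finset.le_sup (f := fun x => univ.sup fun y => (prtGraph prt).dist x y) (mem_univ z)))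
  exact Finset.le_sup (f := fun y => (prtGraph prt).dist z y) (mem_univ o)

end Aux

/-- For the weighting built from self-loops `π(x)` and BFS-tree edges weighted
`(ε/(2D))·π(T_x)`: the total weight is at most `1 + ε`, the induced stationary distribution
`π_w` satisfies `π_w(x)/π(x) ≥ 1/(1+ε) ≥ 1−ε` at every vertex, and `‖π_w − π‖_TV ≤ ε`. -/
theorem bfs_weighting_almost_uniform {V : Type*} [Fintype V]
    (G : SimpleGraph V) (hG : G.Connected)
    (π : V → ℝ) (hpos : ∀ x, 0 < π x) (hsum : ∑ x, π x = 1)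
    (prt : V → V) (o : V)
    (hroot : prt o = o) (hreach : ∀ z, ∃ n, prt^[n] z = o)
    (htree : ∀ x, x ≠ o → G.Adj x (prt x))
    (hBFS : ∀ x, x ≠ o → G.dist (prt x) o + 1 = G.dist x o)
    (ε : ℝ) (hε0 : 0 < ε) (hε1 : ε < 1) :
    (∑ x, bfsVertexW prt o π ε x) ≤ 1 + ε ∧
    (∀ x, (bfsVertexW prt o π ε x / ∑ y, bfsVertexW prt o π ε y) / π x ≥ 1 / (1 + ε)) ∧
    (1 / (1 + ε) : ℝ) ≥ 1 - ε ∧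
    (1 / 2) * ∑ x, |bfsVertexW prt o π ε x / (∑ y, bfsVertexW prt o π ε y) - π x| ≤ ε := by
  classical
  have hk0 : (0:ℝ) ≤ ε / (2 * (treeDiam prt : ℝ)) := by positivity
  have hEnn : ∀ c, 0 ≤ bfsEdgeW prt o π ε c := by
    intro c
    unfold bfsEdgeW
    split
    · exact le_refl 0
    · exact mul_nonneg hk0 (Finset.sum_nonneg fun z _ => (hpos z).le)
  have hprt_ne : ∀ c : V, prt c = c → c = o := by
    intro c hc
    obtain ⟨m, hm⟩ := hreach c
    rwa [Function.iterate_fixed hc] at hm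
  set E := ∑ c, bfsEdgeW prt o π ε c with hEdef
  have hE0 : 0 ≤ E := Finset.sum_nonneg fun c _ => hEnn c
  -- rewrite E via the filter over non-root vertices
  have h1 : E = ∑ c ∈ univ.filter (fun c => ¬ c = o),
      ((ε / (2 * (treeDiam prt : ℝ))) * ∑ z ∈ subtree prt c, π z) := by
    rw [hEdef, Finset.sum_filter]
    refine Finset.sum_congr rfl fun c _ => ?_
    rw [ite_not]
    rfl
  have hswap : ∑ c ∈ univ.filter (fun c => ¬ c = o), ∑ z ∈ subtree prt c, π z
      = ∑ z, π z * (depth hreach z : ℝ) := by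
    have hsub : ∀ c : V, ∑ z ∈ subtree prt c, π z
        = ∑ z, if (∃ n, prt^[n] z = c) then π z else 0 := fun c => by
      rw [subtree, Finset.sum_filter]
    simp_rw [hsub]
    rw [Finset.sum_comm]
    refine Finset.sum_congr rfl fun z _ => ?_
    rw [← Finset.sum_filter, Finset.sum_const, nsmul_eq_mul, card_anc hroot hreach z, mul_comm]
  have hEcount : E = (ε / (2 * (treeDiam prt : ℝ))) * ∑ z, π z * (depth hreach z : ℝ) := by
    rw [h1, ← Finset.mul_sum, hswap]
  have hdiam : ∀ z, (depth hreach z : ℝ) ≤ (treeDiam prt : ℝ) :=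
    fun z => Nat.cast_le.2 (depth_le_diam hroot hreach z)
  have hEle : E ≤ ε / 2 := by
    rw [hEcount]
    have h2 : ∑ z, π z * (depth hreach z : ℝ) ≤ ∑ z, π z * (treeDiam prt : ℝ) :=
      Finset.sum_le_sum fun z _ => mul_le_mul_of_nonneg_left (hdiam z) (hpos z).le
    rw [← Finset.sum_mul, hsum, one_mul] at h2
    have h3 : (ε / (2 * (treeDiam prt : ℝ))) * ∑ z, π z * (depth hreach z : ℝ)
        ≤ (ε / (2 * (treeDiam prt : ℝ))) * (treeDiam prt : ℝ) :=
      mul_le_mul_of_nonneg_left h2 hk0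
    refine le_trans h3 ?_
    rcases eq_or_ne ((treeDiam prt : ℝ)) 0 with hD0 | hD0
    · rw [hD0, mul_zero]
      positivity
    · rw [show (ε / (2 * (treeDiam prt : ℝ))) * (treeDiam prt : ℝ) = ε / 2 from by
        field_simp]
  -- total weight
  have hSsum : ∑ x, bfsVertexW prt o π ε x = 1 + 2 * E := by
    unfold bfsVertexW
    rw [Finset.sum_add_distrib, Finset.sum_add_distrib, hsum]
    have hthird : ∑ x, ∑ c ∈ univ.filter (fun c => prt c = x ∧ c ≠ x), bfsEdgeW prt o π ε c
        = E := by
      rw [hEdef]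
      simp_rw [Finset.sum_filter]
      rw [Finset.sum_comm]
      refine Finset.sum_congr rfl fun c _ => ?_
      simp_rw [ite_and]
      rw [Finset.sum_ite_eq]
      simp only [mem_univ, if_true]
      by_cases hc : c = o
      · subst hc
        rw [if_neg (by rw [hroot]; exact fun h => h rfl)]
        simp [bfsEdgeW]
      · rw [if_pos (fun h => hc (hprt_ne c h.symm))]
    rw [hthird, ← hEdef]
    ring
  have hSle : ∑ x, bfsVertexW prt o π ε x ≤ 1 + ε := by rw [hSsum]; linarith
  have hS1 : (1:ℝ) ≤ ∑ x, bfsVertexW prt o π ε x := by rw [hSsum]; linarith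
  have hSpos : (0:ℝ) < ∑ x, bfsVertexW prt o π ε x := lt_of_lt_of_le one_pos hS1
  have hwge : ∀ x, π x ≤ bfsVertexW prt o π ε x := by
    intro x
    have h4 := hEnn x
    have h5 : 0 ≤ ∑ c ∈ univ.filter (fun c => prt c = x ∧ c ≠ x), bfsEdgeW prt o π ε c :=
      Finset.sum_nonneg fun c _ => hEnn c
    unfold bfsVertexW
    linarith
  have hε1' : (0:ℝ) < 1 + ε := by linarith
  have hratio : ∀ x, π x / (1 + ε) ≤ bfsVertexW prt o π ε x / ∑ y, bfsVertexW prt o π ε y :=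
    fun x => div_le_div₀ (le_trans (hpos x).le (hwge x)) (hwge x) hSpos hSle
  refine ⟨hSle, ?_, ?_, ?_⟩
  · intro x
    rw [ge_iff_le, le_div_iff₀ (hpos x), one_div_mul_eq_div]
    exact hratio x
  · rw [ge_iff_le, le_div_iff₀ hε1']
    nlinarith
  · have hsum1 : ∑ x, bfsVertexW prt o π ε x / ∑ y, bfsVertexW prt o π ε y = 1 := by
      rw [← Finset.sum_div, div_self (ne_of_gt hSpos)]
    have hlow : ∀ x, -(ε * π x)
        ≤ bfsVertexW prt o π ε x / (∑ y, bfsVertexW prt o π ε y) - π x := by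
      intro x
      have h1 := hratio x
      have hb : π x / (1 + ε) * (1 + ε) = π x := div_mul_cancel₀ _ (ne_of_gt hε1')
      have hbpos : 0 < π x / (1 + ε) := div_pos (hpos x) hε1'
      nlinarith [mul_pos hbpos (mul_pos hε0 hε0)]
    have habs : ∀ x, |bfsVertexW prt o π ε x / (∑ y, bfsVertexW prt o π ε y) - π x|
        ≤ (bfsVertexW prt o π ε x / (∑ y, bfsVertexW prt o π ε y) - π x) + 2 * (ε * π x) := by
      intro x
      have h6 := hlow x
      rcases abs_cases (bfsVertexW prt o π ε x / (∑ y, bfsVertexW prt o π ε y) - π x) with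
        ⟨h7, h8⟩ | ⟨h7, h8⟩ <;> [skip; skip] <;>
        (rw [h7]; nlinarith [hpos x])
    have hfin : ∑ x, |bfsVertexW prt o π ε x / (∑ y, bfsVertexW prt o π ε y) - π x|
        ≤ 2 * ε := by
      refine le_trans (Finset.sum_le_sum fun x _ => habs x) ?_
      rw [Finset.sum_add_distrib, Finset.sum_sub_distrib, hsum1, hsum]
      simp_rw [← mul_assoc]
      rw [← Finset.mul_sum, hsum]
      linarith
    linarith
end
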